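/- Let h_1,…,h_r ∈ ℝ^n and S = {x ∈ ℝ^n : h_i^T x ≤ 1, i = 1,…,r}. Let A ∈ ℝ^{n×n}, γ ≥ 0, λ ≥ 0, and let Q ∈ ℝ^{n×n} be a symmetric positive definite matrix such that the 2n×2n block matrix [[Q − A Q A^T, −A Q], [−Q A^T, −Q]] − λ·[[γ² I, 0], [0, −I]] is positive semidefinite, h_i^T Q h_i ≤ 1 for every i = 1,…,r, and x ∈ ℝ^n satisfies x^T Q^{-1} x ≤ 1. Then for every function g : ℝ^n → ℝ^n satisfying ‖g(z)‖ ≤ γ‖z‖ for all z ∈ S (with ‖·‖ the Euclidean norm), the trajectory defined by x_0 = x and x_{t+1} = A x_t + g(x_t) satisfies x_t ∈ S for every integer t ≥ 0. -/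

import Mathlib

open Matrix

private lemma dps_nonneg {n : ℕ} (v : Fin n → ℝ) : 0 ≤ v ⬝ᵥ v :=
  Finset.sum_nonneg fun i _ => mul_self_nonneg _

private lemma dp_shift {n : ℕ} (A : Matrix (Fin n) (Fin n) ℝ) (p x : Fin n → ℝ) :
    p ⬝ᵥ (A *ᵥ x) = (Aᵀ *ᵥ p) ⬝ᵥ x := by
  rw [dotProduct_mulVec, mulVec_transpose]

private lemma psd_nonneg {m : Type*} [Fintype m] {M : Matrix m m ℝ} (hM : M.PosSemidef)
    (x : m → ℝ) : 0 ≤ x ⬝ᵥ (M *ᵥ x) := by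
  simpa using hM.dotProduct_mulVec_nonneg x

private lemma psd_cs {n : ℕ} {M : Matrix (Fin n) (Fin n) ℝ} (hM : M.PosSemidef)
    (a b : Fin n → ℝ) :
    (a ⬝ᵥ (M *ᵥ b)) ^ 2 ≤ (a ⬝ᵥ (M *ᵥ a)) * (b ⬝ᵥ (M *ᵥ b)) := by
  have hMt : Mᵀ = M := by
    have := hM.1
    rwa [Matrix.IsHermitian, conjTranspose_eq_transpose_of_trivial] at this
  have hsym : ∀ u v : Fin n → ℝ, u ⬝ᵥ (M *ᵥ v) = v ⬝ᵥ (M *ᵥ u) := by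
    intro u v
    rw [dp_shift, hMt, dotProduct_comm]
  have key : ∀ t : ℝ, 0 ≤ (b ⬝ᵥ (M *ᵥ b)) * (t * t) + (2 * (a ⬝ᵥ (M *ᵥ b))) * t
      + (a ⬝ᵥ (M *ᵥ a)) := by
    intro t
    have h0 := psd_nonneg hM (t • b + a)
    have e : (t • b + a) ⬝ᵥ (M *ᵥ (t • b + a))
        = (b ⬝ᵥ (M *ᵥ b)) * (t * t) + (2 * (a ⬝ᵥ (M *ᵥ b))) * t + (a ⬝ᵥ (M *ᵥ a)) := by
      simp only [mulVec_add, mulVec_smul, dotProduct_add, add_dotProduct, dotProduct_smul,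
        smul_dotProduct, smul_eq_mul, hsym b a]
      ring
    linarith [e ▸ h0]
  have hd := discrim_le_zero key
  rw [discrim] at hd
  nlinarith [hd]

private lemma le_of_sq_le_sq' {a b : ℝ} (h : a ^ 2 ≤ b ^ 2) (hb : 0 ≤ b) : a ≤ b := by
  nlinarith [h, hb]

/-- Block-LMI certificate of infinite-step safety for nonlinear dynamics
`x ↦ A x + g(x)` with `‖g(z)‖ ≤ γ‖z‖` on `S`: every trajectory started inside the
ellipsoid `{z : zᵀ Q⁻¹ z ≤ 1}` remains in the polyhedral safety region
`S = {z : hᵢᵀ z ≤ 1}` for all time. -/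
theorem stmt_16 (n r : ℕ) (h : Fin r → Fin n → ℝ)
    (A : Matrix (Fin n) (Fin n) ℝ) (γ lam : ℝ) (hγ : 0 ≤ γ) (hlam : 0 ≤ lam)
    (Q : Matrix (Fin n) (Fin n) ℝ) (hQ : Q.PosDef)
    (hblock : (Matrix.fromBlocks (Q - A * Q * Aᵀ) (-(A * Q)) (-(Q * Aᵀ)) (-Q) -
        lam • Matrix.fromBlocks (γ ^ 2 • (1 : Matrix (Fin n) (Fin n) ℝ)) 0 0
          (-(1 : Matrix (Fin n) (Fin n) ℝ))).PosSemidef)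
    (hpolar : ∀ i, h i ⬝ᵥ (Q *ᵥ h i) ≤ 1)
    (x : Fin n → ℝ) (hx : x ⬝ᵥ (Q⁻¹ *ᵥ x) ≤ 1)
    (g : (Fin n → ℝ) → (Fin n → ℝ))
    (hg : ∀ z, (∀ i, h i ⬝ᵥ z ≤ 1) →
      Real.sqrt (∑ i, g z i ^ 2) ≤ γ * Real.sqrt (∑ i, z i ^ 2))
    (traj : ℕ → Fin n → ℝ) (htraj0 : traj 0 = x)
    (htraj : ∀ t, traj (t + 1) = A *ᵥ traj t + g (traj t)) :
    ∀ t, ∀ i, h i ⬝ᵥ traj t ≤ 1 := by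
  have hQPSD := hQ.posSemidef
  have hQiPSD := hQ.inv.posSemidef
  have hQQ : Q * Q⁻¹ = 1 := Matrix.mul_nonsing_inv _ (Matrix.isUnit_iff_isUnit_det _ |>.1 hQ.isUnit)
  have hcancel : ∀ v : Fin n → ℝ, Q *ᵥ (Q⁻¹ *ᵥ v) = v := by
    intro v; rw [mulVec_mulVec, hQQ, one_mulVec]
  -- mixed Cauchy–Schwarz : (a ⬝ᵥ z)² ≤ (aᵀ Q a)(zᵀ Q⁻¹ z)
  have mixedCS : ∀ a z : Fin n → ℝ,
      (a ⬝ᵥ z) ^ 2 ≤ (a ⬝ᵥ (Q *ᵥ a)) * (z ⬝ᵥ (Q⁻¹ *ᵥ z)) := by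
    intro a z
    have h1 := psd_cs hQPSD a (Q⁻¹ *ᵥ z)
    rw [hcancel] at h1
    have h2 : (Q⁻¹ *ᵥ z) ⬝ᵥ z = z ⬝ᵥ (Q⁻¹ *ᵥ z) := dotProduct_comm _ _
    rw [h2] at h1
    exact h1
  -- ellipsoid is contained in the polytope
  have mem : ∀ z : Fin n → ℝ, z ⬝ᵥ (Q⁻¹ *ᵥ z) ≤ 1 → ∀ i, h i ⬝ᵥ z ≤ 1 := by
    intro z hz i
    have h1 := mixedCS (h i) z
    have h2 := psd_nonneg hQPSD (h i)
    have h3 := psd_nonneg hQiPSD z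
    have h4 := hpolar i
    nlinarith [h1, h2, h3, h4]
  -- the quadratic inequality coming from the block LMI
  have blk : ∀ p q : Fin n → ℝ,
      (Aᵀ *ᵥ p + q) ⬝ᵥ (Q *ᵥ (Aᵀ *ᵥ p + q)) + lam * γ ^ 2 * (p ⬝ᵥ p)
        ≤ p ⬝ᵥ (Q *ᵥ p) + lam * (q ⬝ᵥ q) := by
    intro p q
    have h0 := psd_nonneg hblock (Sum.elim p q)
    rw [sub_mulVec, smul_mulVec, fromBlocks_mulVec, fromBlocks_mulVec] at h0
    simp only [zero_mulVec, add_zero, zero_add, neg_mulVec, one_mulVec, smul_mulVec,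
      dotProduct_sub, dotProduct_smul, smul_eq_mul] at h0
    rw [sumElim_dotProduct_sumElim, sumElim_dotProduct_sumElim] at h0
    have hQt : Qᵀ = Q := by
      have := hQ.isHermitian
      rwa [Matrix.IsHermitian, conjTranspose_eq_transpose_of_trivial] at this
    simp only [sub_mulVec, ← mulVec_mulVec, mulVec_add, dotProduct_add, add_dotProduct,
      dotProduct_sub, dotProduct_neg, dotProduct_smul, smul_eq_mul, dp_shift A, dp_shift Q,
      transpose_transpose, hQt, Sum.elim_comp_inl, Sum.elim_comp_inr] at h0 ⊢
    have hxq : Q *ᵥ q ⬝ᵥ (Aᵀ *ᵥ p) = Q *ᵥ (Aᵀ *ᵥ p) ⬝ᵥ q := by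
      rw [dotProduct_comm, dp_shift Q, hQt]
    nlinarith [h0, hxq]
  -- one-step invariance of the ellipsoid
  have step : ∀ z w : Fin n → ℝ, z ⬝ᵥ (Q⁻¹ *ᵥ z) ≤ 1 → w ⬝ᵥ w ≤ γ ^ 2 * (z ⬝ᵥ z) →
      (A *ᵥ z + w) ⬝ᵥ (Q⁻¹ *ᵥ (A *ᵥ z + w)) ≤ 1 := by
    intro z w hz hw
    by_contra hcon
    push_neg at hcon
    set y : Fin n → ℝ := A *ᵥ z + w with hy
    set v : Fin n → ℝ := Q⁻¹ *ᵥ y with hv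
    have hvQv : v ⬝ᵥ (Q *ᵥ v) = y ⬝ᵥ v := by
      rw [hv, hcancel, dotProduct_comm]
    by_cases hz0 : z = 0
    · have hw0 : w = 0 := by
        have : w ⬝ᵥ w ≤ 0 := by simpa [hz0] using hw
        exact dotProduct_self_eq_zero.1 (le_antisymm this (dps_nonneg w))
      have : y = 0 := by simp [hy, hz0, hw0]
      rw [this] at hcon
      simp at hcon
      linarith
    · have hzz : 0 < z ⬝ᵥ z := lt_of_le_of_ne (dps_nonneg z)
        (fun hc => hz0 (dotProduct_self_eq_zero.1 hc.symm))
      set nz : ℝ := Real.sqrt (z ⬝ᵥ z) with hnz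
      set nv : ℝ := Real.sqrt (v ⬝ᵥ v) with hnv
      have hnz2 : nz ^ 2 = z ⬝ᵥ z := Real.sq_sqrt (dps_nonneg z)
      have hnv2 : nv ^ 2 = v ⬝ᵥ v := Real.sq_sqrt (dps_nonneg v)
      have hnzpos : 0 < nz := Real.sqrt_pos.2 hzz
      have hnvnn : 0 ≤ nv := Real.sqrt_nonneg _
      set q : Fin n → ℝ := (γ * nv / nz) • z with hq
      have hqz : q ⬝ᵥ z = γ * nv * nz := by
        rw [hq, smul_dotProduct, smul_eq_mul, ← hnz2]
        field_simp
      have hqq : q ⬝ᵥ q = γ ^ 2 * nv ^ 2 := by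
        rw [hq, smul_dotProduct, dotProduct_smul, smul_eq_mul, smul_eq_mul, ← hnz2]
        field_simp
      have hvw : v ⬝ᵥ w ≤ γ * nv * nz := by
        have hcs : (v ⬝ᵥ w) ^ 2 ≤ (v ⬝ᵥ v) * (w ⬝ᵥ w) := by
          have h1 := psd_cs (Matrix.PosSemidef.one (n := Fin n) (R := ℝ)) v w
          simpa using h1
        apply le_of_sq_le_sq' _ (by positivity)
        calc (v ⬝ᵥ w) ^ 2 ≤ (v ⬝ᵥ v) * (w ⬝ᵥ w) := hcs
          _ ≤ (v ⬝ᵥ v) * (γ ^ 2 * (z ⬝ᵥ z)) := by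
              apply mul_le_mul_of_nonneg_left hw (dps_nonneg v)
          _ = (γ * nv * nz) ^ 2 := by rw [← hnz2, ← hnv2]; ring
      -- t := y ⬝ᵥ v ; K := (Aᵀ v + q)ᵀ Q (Aᵀ v + q)
      set K : ℝ := (Aᵀ *ᵥ v + q) ⬝ᵥ (Q *ᵥ (Aᵀ *ᵥ v + q)) with hK
      have hKt : K ≤ y ⬝ᵥ v := by
        have h1 := blk v q
        rw [hvQv, hqq, hnv2] at h1
        nlinarith [h1, hlam]
      have hty : y ⬝ᵥ v ≤ (Aᵀ *ᵥ v + q) ⬝ᵥ z := by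
        have h1 : y ⬝ᵥ v = (Aᵀ *ᵥ v) ⬝ᵥ z + v ⬝ᵥ w := by
          rw [dotProduct_comm, hy, dotProduct_add, dp_shift]
        have h2 : (Aᵀ *ᵥ v + q) ⬝ᵥ z = (Aᵀ *ᵥ v) ⬝ᵥ z + γ * nv * nz := by
          rw [add_dotProduct, hqz]
        linarith [hvw]
      have hcs2 : ((Aᵀ *ᵥ v + q) ⬝ᵥ z) ^ 2 ≤ K * (z ⬝ᵥ (Q⁻¹ *ᵥ z)) := mixedCS _ z
      have hK0 : 0 ≤ K := psd_nonneg hQPSD _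
      have he0 : 0 ≤ z ⬝ᵥ (Q⁻¹ *ᵥ z) := psd_nonneg hQiPSD z
      have ht1 : 1 < y ⬝ᵥ v := hcon
      nlinarith [hcs2, hK0, he0, hz, ht1, hKt, hty,
        mul_le_of_le_one_right hK0 hz]
  -- the ellipsoid is invariant along the trajectory
  have inv : ∀ t : ℕ, traj t ⬝ᵥ (Q⁻¹ *ᵥ traj t) ≤ 1 := by
    intro t
    induction t with
    | zero => rw [htraj0]; exact hx
    | succ t ih =>
        rw [htraj]
        apply step _ _ ih
        have hin := mem _ ih
        have hgz := hg (traj t) hin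
        have ha : ∑ i, g (traj t) i ^ 2 = g (traj t) ⬝ᵥ g (traj t) := by
          simp [dotProduct, sq]
        have hb : ∑ i, traj t i ^ 2 = traj t ⬝ᵥ traj t := by
          simp [dotProduct, sq]
        rw [ha, hb] at hgz
        have h1 : Real.sqrt (g (traj t) ⬝ᵥ g (traj t)) ^ 2
            ≤ (γ * Real.sqrt (traj t ⬝ᵥ traj t)) ^ 2 := by
          apply pow_le_pow_left₀ (Real.sqrt_nonneg _) hgz
        rw [Real.sq_sqrt (dps_nonneg _)] at h1
        calc g (traj t) ⬝ᵥ g (traj t) ≤ (γ * Real.sqrt (traj t ⬝ᵥ traj t)) ^ 2 := h1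
          _ = γ ^ 2 * (traj t ⬝ᵥ traj t) := by
              rw [mul_pow, Real.sq_sqrt (dps_nonneg _)]
  intro t i
  exact mem _ (inv t) i
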